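/- Let R be an integral domain, f ∈ R nonzero non-invertible, and a ∈ R. If a is irreducible in R and a is not associated with f (i.e., a is not a unit multiple of f), then the image of a in S = R[u,v]/(uv - f) is irreducible in S. -/

import Mathlib

open MvPolynomial

/-- The suspension ring `S = R[u,v]/(uv - f)`. -/
abbrev Susp (R : Type*) [CommRing R] (f : R) : Type _ :=
  MvPolynomial (Fin 2) R ⧸
    Ideal.span {(X 0 * X 1 - C f : MvPolynomial (Fin 2) R)}

/-- The image of the variable `u` in `S`. -/
noncomputable abbrev suspU (R : Type*) [CommRing R] (f : R) : Susp R f :=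
  Ideal.Quotient.mk _ (X 0)

/-- The image of the variable `v` in `S`. -/
noncomputable abbrev suspV (R : Type*) [CommRing R] (f : R) : Susp R f :=
  Ideal.Quotient.mk _ (X 1)

namespace SuspAux
open LaurentPolynomial

theorem mul_T_apply {R : Type*} [CommRing R] (q : R[T;T⁻¹]) (n m : ℤ) :
    ((q * T n : R[T;T⁻¹])).coeff m = q.coeff (m - n) :=
  (AddMonoidAlgebra.coeff_mul_single_apply q 1 n m).trans (mul_one _)

theorem C_mul_apply' {R : Type*} [CommRing R] (r : R) (q : R[T;T⁻¹]) (m : ℤ) :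
    ((LaurentPolynomial.C r * q : R[T;T⁻¹])).coeff m = r * q.coeff m :=
  AddMonoidAlgebra.coeff_single_zero_mul q r m

theorem C_mul_T_apply {R : Type*} [CommRing R] (r : R) (n m : ℤ) :
    ((LaurentPolynomial.C r * T n : R[T;T⁻¹])).coeff m = if n = m then r else 0 := by
  rw [← single_eq_C_mul_T]
  exact Finsupp.single_apply

variable {R : Type*} [CommRing R] (f : R)

noncomputable def lphi : MvPolynomial (Fin 2) R →+* R[T;T⁻¹] :=
  MvPolynomial.eval₂Hom LaurentPolynomial.C ![T 1, LaurentPolynomial.C f * T (-1)]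

@[simp] lemma lphi_C (r : R) : lphi f (MvPolynomial.C r) = LaurentPolynomial.C r := by
  simp [lphi]
@[simp] lemma lphi_X0 : lphi f (X 0 : MvPolynomial (Fin 2) R) = T 1 := by simp [lphi]
@[simp] lemma lphi_X1 : lphi f (X 1 : MvPolynomial (Fin 2) R) = LaurentPolynomial.C f * T (-1) := by
  simp [lphi]

lemma lphi_rel : lphi f (X 0 * X 1 - MvPolynomial.C f : MvPolynomial (Fin 2) R) = 0 := by
  rw [map_sub, map_mul, lphi_X0, lphi_X1, lphi_C]
  rw [← mul_assoc, mul_comm (T 1), mul_assoc, ← T_add]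
  simp

lemma dvd_lphi_neg_coeff (p : MvPolynomial (Fin 2) R) (n : ℕ) :
    f ^ n ∣ (lphi f p).coeff (-(n : ℤ)) := by
  induction p using MvPolynomial.induction_on generalizing n with
  | C r =>
    rw [lphi_C]
    rcases Nat.eq_zero_or_pos n with rfl | hn
    · simp
    · rw [LaurentPolynomial.C_apply, if_neg (by omega)]
      exact dvd_zero _
  | add p q hp hq =>
    rw [map_add]
    exact dvd_add (hp n) (hq n)
  | mul_X p i hp =>
    fin_cases i
    · simp only [Fin.zero_eta, Fin.isValue]
      rw [map_mul, lphi_X0, mul_T_apply]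
      have h2 : (-(n : ℤ) - 1) = -((n + 1 : ℕ) : ℤ) := by push_cast; ring
      rw [h2]
      exact (pow_dvd_pow f (Nat.le_succ n)).trans (hp (n + 1))
    · simp only [Fin.mk_one, Fin.isValue]
      rw [map_mul, lphi_X1, ← mul_assoc, mul_comm (lphi f p), mul_assoc, C_mul_apply',
        mul_T_apply]
      cases n with
      | zero => simp
      | succ k =>
        have h2 : (-((k + 1 : ℕ) : ℤ) - -1) = -(k : ℤ) := by push_cast; ring
        rw [h2, pow_succ, mul_comm (f ^ k) f]
        exact mul_dvd_mul_left f (hp k)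

lemma toLaurent_apply_coe (F : Polynomial R) (n : ℕ) :
    (Polynomial.toLaurent F).coeff (n : ℤ) = F.coeff n := by
  induction F using Polynomial.induction_on' with
  | add p q hp hq => rw [map_add, Polynomial.coeff_add, ← hp, ← hq]; rfl
  | monomial k r =>
    rw [Polynomial.toLaurent_C_mul_T, C_mul_T_apply, Polynomial.coeff_monomial]
    simp [Int.natCast_inj]

lemma toLaurent_apply_neg (F : Polynomial R) (m : ℤ) (hm : m < 0) :
    (Polynomial.toLaurent F).coeff m = 0 := by
  induction F using Polynomial.induction_on' with
  | add p q hp hq => rw [map_add]; rw [AddMonoidAlgebra.coeff_add, Finsupp.add_apply, hp, hq, add_zero]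
  | monomial k r =>
    rw [Polynomial.toLaurent_C_mul_T, C_mul_T_apply, if_neg (by omega)]

/-- evaluation of a polynomial at `C f * T (-1)`. -/
noncomputable def ev2 : Polynomial R →+* R[T;T⁻¹] :=
  Polynomial.eval₂RingHom LaurentPolynomial.C (LaurentPolynomial.C f * T (-1))

lemma ev2_monomial (k : ℕ) (r : R) :
    ev2 f (Polynomial.monomial k r) = LaurentPolynomial.C (r * f ^ k) * T (-(k : ℤ)) := by
  rw [ev2, Polynomial.coe_eval₂RingHom, Polynomial.eval₂_monomial, mul_pow, ← map_pow, T_pow,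
    ← mul_assoc, ← map_mul]
  norm_num

lemma ev2_apply_neg_coe (G : Polynomial R) (n : ℕ) :
    (ev2 f G).coeff (-(n : ℤ)) = f ^ n * G.coeff n := by
  induction G using Polynomial.induction_on' with
  | add p q hp hq =>
    rw [map_add, Polynomial.coeff_add]; rw [AddMonoidAlgebra.coeff_add, Finsupp.add_apply, hp, hq, mul_add]
  | monomial k r =>
    rw [ev2_monomial, C_mul_T_apply, Polynomial.coeff_monomial]
    by_cases h : k = n
    · subst h; rw [if_pos rfl, if_pos rfl, mul_comm]
    · rw [if_neg (by omega), if_neg h, mul_zero]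

lemma ev2_apply_pos (G : Polynomial R) (m : ℤ) (hm : 0 < m) : (ev2 f G).coeff m = 0 := by
  induction G using Polynomial.induction_on' with
  | add p q hp hq => rw [map_add]; rw [AddMonoidAlgebra.coeff_add, Finsupp.add_apply, hp, hq, add_zero]
  | monomial k r => rw [ev2_monomial, C_mul_T_apply, if_neg (by omega)]

lemma lphi_aevalX0 (F : Polynomial R) :
    lphi f (Polynomial.aeval (X 0 : MvPolynomial (Fin 2) R) F) = Polynomial.toLaurent F := by
  induction F using Polynomial.induction_on' with
  | add p q hp hq => rw [map_add, map_add, map_add, hp, hq]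
  | monomial k r =>
    rw [Polynomial.aeval_monomial, Polynomial.toLaurent_C_mul_T, map_mul, map_pow,
      MvPolynomial.algebraMap_eq, lphi_C, lphi_X0, T_pow, mul_one]

lemma lphi_aevalX1 (G : Polynomial R) :
    lphi f (Polynomial.aeval (X 1 : MvPolynomial (Fin 2) R) G) = ev2 f G := by
  induction G using Polynomial.induction_on' with
  | add p q hp hq => rw [map_add, map_add, map_add, hp, hq]
  | monomial k r =>
    rw [Polynomial.aeval_monomial, ev2_monomial, map_mul, map_pow,
      MvPolynomial.algebraMap_eq, lphi_C, lphi_X1, mul_pow, ← map_pow, T_pow, ← mul_assoc,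
      ← map_mul]
    norm_num

lemma exists_normal_form (p : MvPolynomial (Fin 2) R) :
    ∃ F G : Polynomial R,
      p - (Polynomial.aeval (X 0) F + Polynomial.aeval (X 1) G) ∈
        Ideal.span {(X 0 * X 1 - MvPolynomial.C f : MvPolynomial (Fin 2) R)} := by
  induction p using MvPolynomial.induction_on with
  | C r => exact ⟨Polynomial.C r, 0, by simp⟩
  | add p q hp hq =>
    obtain ⟨F1, G1, h1⟩ := hp; obtain ⟨F2, G2, h2⟩ := hq
    refine ⟨F1 + F2, G1 + G2, ?_⟩
    have h3 := Ideal.add_mem _ h1 h2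
    convert h3 using 1
    rw [map_add, map_add]; ring
  | mul_X p i hp =>
    obtain ⟨F, G, h⟩ := hp
    fin_cases i
    · simp only [Fin.zero_eta, Fin.isValue]
      refine ⟨F * Polynomial.X + Polynomial.C (G.coeff 0) * Polynomial.X,
        Polynomial.C f * G.divX, ?_⟩
      have key : (Polynomial.aeval (X 1 : MvPolynomial (Fin 2) R) G) =
          MvPolynomial.C (G.coeff 0) + X 1 * Polynomial.aeval (X 1) G.divX := by
        conv_lhs => rw [← Polynomial.X_mul_divX_add G]
        simp only [map_add, map_mul, Polynomial.aeval_X, Polynomial.aeval_C,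
          MvPolynomial.algebraMap_eq]
        ring
      have mem2 : (Polynomial.aeval (X 1 : MvPolynomial (Fin 2) R) G.divX) *
          (X 0 * X 1 - MvPolynomial.C f) ∈
          Ideal.span {(X 0 * X 1 - MvPolynomial.C f : MvPolynomial (Fin 2) R)} :=
        Ideal.mul_mem_left _ _ (Ideal.subset_span (Set.mem_singleton _))
      have h3 := Ideal.add_mem _ (Ideal.mul_mem_right (X 0) _ h) mem2
      convert h3 using 1
      simp only [map_add, map_mul, Polynomial.aeval_X, Polynomial.aeval_C,
        MvPolynomial.algebraMap_eq, key]
      ring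
    · simp only [Fin.mk_one, Fin.isValue]
      refine ⟨Polynomial.C f * F.divX,
        G * Polynomial.X + Polynomial.C (F.coeff 0) * Polynomial.X, ?_⟩
      have key : (Polynomial.aeval (X 0 : MvPolynomial (Fin 2) R) F) =
          MvPolynomial.C (F.coeff 0) + X 0 * Polynomial.aeval (X 0) F.divX := by
        conv_lhs => rw [← Polynomial.X_mul_divX_add F]
        simp only [map_add, map_mul, Polynomial.aeval_X, Polynomial.aeval_C,
          MvPolynomial.algebraMap_eq]
        ring
      have mem2 : (Polynomial.aeval (X 0 : MvPolynomial (Fin 2) R) F.divX) *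
          (X 0 * X 1 - MvPolynomial.C f) ∈
          Ideal.span {(X 0 * X 1 - MvPolynomial.C f : MvPolynomial (Fin 2) R)} :=
        Ideal.mul_mem_left _ _ (Ideal.subset_span (Set.mem_singleton _))
      have h3 := Ideal.add_mem _ (Ideal.mul_mem_right (X 1) _ h) mem2
      convert h3 using 1
      simp only [map_add, map_mul, Polynomial.aeval_X, Polynomial.aeval_C,
        MvPolynomial.algebraMap_eq, key]
      ring

lemma mem_span_of_lphi_eq_zero [IsDomain R] (hf0 : f ≠ 0) (p : MvPolynomial (Fin 2) R)
    (hp : lphi f p = 0) :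
    p ∈ Ideal.span {(X 0 * X 1 - MvPolynomial.C f : MvPolynomial (Fin 2) R)} := by
  obtain ⟨F, G, h⟩ := exists_normal_form f p
  have h0 : lphi f (p - (Polynomial.aeval (X 0) F + Polynomial.aeval (X 1) G)) = 0 := by
    rw [Ideal.mem_span_singleton] at h
    obtain ⟨c, hc⟩ := h
    rw [hc, map_mul, lphi_rel, zero_mul]
  rw [map_sub, hp, map_add, lphi_aevalX0, lphi_aevalX1, zero_sub, neg_eq_zero] at h0
  have hcoeff : ∀ m : ℤ, (Polynomial.toLaurent F).coeff m + (ev2 f G).coeff m = 0 := by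
    intro m
    have := congrArg (fun q : R[T;T⁻¹] => q.coeff m) h0
    simpa [AddMonoidAlgebra.coeff_add, Finsupp.add_apply] using this
  have hF : ∀ n : ℕ, 0 < n → F.coeff n = 0 := by
    intro n hn
    have := hcoeff (n : ℤ)
    rwa [toLaurent_apply_coe, ev2_apply_pos f G _ (by exact_mod_cast hn), add_zero] at this
  have hG : ∀ n : ℕ, 0 < n → G.coeff n = 0 := by
    intro n hn
    have := hcoeff (-(n : ℤ))
    rw [toLaurent_apply_neg F _ (by omega), ev2_apply_neg_coe, zero_add] at this
    exact (mul_eq_zero.mp this).resolve_left (pow_ne_zero n hf0)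
  have h00 : G.coeff 0 = -F.coeff 0 := by
    have h1 := hcoeff 0
    have e1 : (Polynomial.toLaurent F).coeff (0 : ℤ) = F.coeff 0 := by
      simpa using toLaurent_apply_coe F 0
    have e2 : ((ev2 f) G).coeff (0 : ℤ) = G.coeff 0 := by
      simpa using ev2_apply_neg_coe f G 0
    rw [e1, e2] at h1
    linear_combination h1
  have hFC : F = Polynomial.C (F.coeff 0) := by
    ext n
    cases n with
    | zero => simp
    | succ k => rw [hF (k + 1) (Nat.succ_pos k), Polynomial.coeff_C, if_neg (by omega)]
  have hGC : G = Polynomial.C (-F.coeff 0) := by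
    ext n
    cases n with
    | zero => simpa using h00
    | succ k => rw [hG (k + 1) (Nat.succ_pos k), Polynomial.coeff_C, if_neg (by omega)]
  have : Polynomial.aeval (X 0 : MvPolynomial (Fin 2) R) F +
      Polynomial.aeval (X 1 : MvPolynomial (Fin 2) R) G = 0 := by
    rw [hFC, hGC, Polynomial.aeval_C, Polynomial.aeval_C]
    simp
  rwa [this, sub_zero] at h

lemma poly_eq_monomial {P : Polynomial R} (h : P.natTrailingDegree = P.natDegree) :
    P = Polynomial.C (P.coeff P.natDegree) * Polynomial.X ^ P.natDegree := by
  ext n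
  rw [Polynomial.coeff_C_mul, Polynomial.coeff_X_pow]
  rcases lt_trichotomy n P.natDegree with hn | rfl | hn
  · rw [if_neg hn.ne, mul_zero, Polynomial.coeff_eq_zero_of_lt_natTrailingDegree (h ▸ hn)]
  · rw [if_pos rfl, mul_one]
  · rw [if_neg hn.ne', mul_zero, Polynomial.coeff_eq_zero_of_natDegree_lt hn]

lemma eq_C_mul_T_of_mul_eq_C [IsDomain R] {x y : R[T;T⁻¹]} {a : R} (ha : a ≠ 0)
    (h : x * y = LaurentPolynomial.C a) :
    ∃ (r s : R) (d : ℤ), r * s = a ∧ x = LaurentPolynomial.C r * T d ∧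
      y = LaurentPolynomial.C s * T (-d) := by
  obtain ⟨n, P, hP⟩ := exists_T_pow x
  obtain ⟨m, Q, hQ⟩ := exists_T_pow y
  have hPQ : Polynomial.toLaurent (P * Q) =
      Polynomial.toLaurent (Polynomial.C a * Polynomial.X ^ (n + m)) := by
    rw [map_mul, hP, hQ, Polynomial.toLaurent_C_mul_X_pow, mul_assoc, mul_comm (T (n : ℤ)),
      mul_assoc, ← T_add, ← mul_assoc, h]
    push_cast
    ring_nf
  have hPQ' : P * Q = Polynomial.C a * Polynomial.X ^ (n + m) :=
    Polynomial.toLaurent_injective hPQ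
  have hprod0 : P * Q ≠ 0 := by
    rw [hPQ']
    exact mul_ne_zero (by simpa using ha) (pow_ne_zero _ Polynomial.X_ne_zero)
  have hP0 : P ≠ 0 := left_ne_zero_of_mul hprod0
  have hQ0 : Q ≠ 0 := right_ne_zero_of_mul hprod0
  have hdeg : P.natDegree + Q.natDegree = n + m := by
    rw [← Polynomial.natDegree_mul hP0 hQ0, hPQ',
      Polynomial.natDegree_C_mul_X_pow _ _ ha]
  have htdeg : P.natTrailingDegree + Q.natTrailingDegree = n + m := by
    rw [← Polynomial.natTrailingDegree_mul hP0 hQ0, hPQ', Polynomial.C_mul_X_pow_eq_monomial,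
      Polynomial.natTrailingDegree_monomial ha]
  have hPt : P.natTrailingDegree = P.natDegree := by
    have h1 := Polynomial.natTrailingDegree_le_natDegree P
    have h2 := Polynomial.natTrailingDegree_le_natDegree Q
    omega
  have hQt : Q.natTrailingDegree = Q.natDegree := by
    have h1 := Polynomial.natTrailingDegree_le_natDegree P
    have h2 := Polynomial.natTrailingDegree_le_natDegree Q
    omega
  set r := P.coeff P.natDegree with hr
  set s := Q.coeff Q.natDegree with hs
  have hPm := poly_eq_monomial hPt
  have hQm := poly_eq_monomial hQt
  have hPL : Polynomial.toLaurent P = LaurentPolynomial.C r * T (P.natDegree : ℤ) := by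
    conv_lhs => rw [hPm]
    rw [map_mul, Polynomial.toLaurent_C, Polynomial.toLaurent_X_pow]
  have hQL : Polynomial.toLaurent Q = LaurentPolynomial.C s * T (Q.natDegree : ℤ) := by
    conv_lhs => rw [hQm]
    rw [map_mul, Polynomial.toLaurent_C, Polynomial.toLaurent_X_pow]
  refine ⟨r, s, (P.natDegree : ℤ) - n, ?_, ?_, ?_⟩
  · have hthis := hPQ'
    rw [hPm, hQm] at hthis
    have h2 : Polynomial.C r * (Polynomial.C s * Polynomial.X ^ (n + m)) =
        Polynomial.C a * Polynomial.X ^ (n + m) := by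
      rw [← hdeg, pow_add] at hthis ⊢
      linear_combination hthis
    have h3 := congrArg (fun W : Polynomial R => W.coeff (n + m)) h2
    simpa [Polynomial.coeff_C_mul, Polynomial.coeff_X_pow] using h3
  · have hx : x = Polynomial.toLaurent P * T (-(n : ℤ)) := by
      rw [hP, mul_assoc, ← T_add]
      simp
    rw [hx, hPL, mul_assoc, ← T_add]
    have he : ((P.natDegree : ℤ) + -(n : ℤ)) = (P.natDegree : ℤ) - n := by ring
    rw [he]
  · have hy : y = Polynomial.toLaurent Q * T (-(m : ℤ)) := by
      rw [hQ, mul_assoc, ← T_add]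
      simp
    rw [hy, hQL, mul_assoc, ← T_add]
    have he : ((Q.natDegree : ℤ) + -(m : ℤ)) = -((P.natDegree : ℤ) - n) := by omega
    rw [he]

noncomputable def psi : Susp R f →+* R[T;T⁻¹] :=
  Ideal.Quotient.lift _ (lphi f) (fun q hq => by
    rw [Ideal.mem_span_singleton] at hq
    obtain ⟨c, rfl⟩ := hq
    rw [map_mul, lphi_rel, zero_mul])

@[simp] lemma psi_mk (p : MvPolynomial (Fin 2) R) :
    psi f (Ideal.Quotient.mk _ p) = lphi f p := rfl

lemma psi_algebraMap (r : R) : psi f (algebraMap R (Susp R f) r) = LaurentPolynomial.C r := by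
  have h1 : algebraMap R (Susp R f) r = Ideal.Quotient.mk _ (MvPolynomial.C r) := rfl
  rw [h1, psi_mk, lphi_C]

lemma psi_injective [IsDomain R] (hf0 : f ≠ 0) : Function.Injective (psi f) := by
  rw [injective_iff_map_eq_zero]
  intro s hs
  obtain ⟨p, rfl⟩ := Ideal.Quotient.mk_surjective s
  rw [psi_mk] at hs
  exact (Ideal.Quotient.eq_zero_iff_mem).mpr (mem_span_of_lphi_eq_zero f hf0 p hs)

lemma one_apply_zero : ((1 : R[T;T⁻¹])).coeff (0 : ℤ) = 1 := by
  rw [AddMonoidAlgebra.one_def]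
  exact Finsupp.single_eq_same

end SuspAux

open SuspAux LaurentPolynomial

/-- If `a ∈ R` is irreducible in `R` and not associated with `f`, then the image
of `a` in `S = R[u,v]/(uv - f)` is irreducible in `S`. -/
theorem irreducible_suspension_of_irreducible (R : Type*) [CommRing R] [IsDomain R]
    (f : R) (hf0 : f ≠ 0) (hf : ¬ IsUnit f) (a : R)
    (ha : Irreducible a) (hna : ¬ Associated a f) :
    Irreducible (algebraMap R (Susp R f) a) := by
  constructor
  · intro hu
    obtain ⟨w, hw⟩ := isUnit_iff_exists_inv.mp (hu.map (psi f))
    rw [psi_algebraMap] at hw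
    apply ha.not_isUnit
    have h1 := congrArg (fun q : R[T;T⁻¹] => q.coeff (0 : ℤ)) hw
    simp only [C_mul_apply', one_apply_zero] at h1
    exact IsUnit.of_mul_eq_one _ h1
  · intro x y hxy
    have hpsi : psi f x * psi f y = LaurentPolynomial.C a := by
      rw [← map_mul, ← hxy, psi_algebraMap]
    obtain ⟨r, s, d, hrs, hx, hy⟩ := eq_C_mul_T_of_mul_eq_C ha.ne_zero hpsi
    rcases lt_trichotomy d 0 with hd | hd | hd
    · exfalso
      obtain ⟨p, hp⟩ := Ideal.Quotient.mk_surjective x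
      have hc := dvd_lphi_neg_coeff f p d.natAbs
      rw [show (-(d.natAbs : ℤ)) = d by omega] at hc
      rw [← hp, psi_mk] at hx
      rw [hx, C_mul_T_apply, if_pos rfl] at hc
      obtain ⟨r', rfl⟩ : f ∣ r :=
        dvd_trans (dvd_pow_self f (by omega : d.natAbs ≠ 0)) hc
      have haf : a = f * (r' * s) := by rw [← hrs]; ring
      rcases ha.isUnit_or_isUnit haf with h1 | h1
      · exact hf h1
      · exact hna (haf ▸ associated_mul_unit_left f _ h1)
    · subst hd
      rw [T_zero, mul_one] at hx
      rw [neg_zero, T_zero, mul_one] at hy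
      have hxx : x = algebraMap R (Susp R f) r :=
        psi_injective f hf0 (by rw [hx, psi_algebraMap])
      have hyy : y = algebraMap R (Susp R f) s :=
        psi_injective f hf0 (by rw [hy, psi_algebraMap])
      rcases ha.isUnit_or_isUnit hrs.symm with h1 | h1
      · exact Or.inl (hxx ▸ h1.map (algebraMap R (Susp R f)))
      · exact Or.inr (hyy ▸ h1.map (algebraMap R (Susp R f)))
    · exfalso
      obtain ⟨q, hq⟩ := Ideal.Quotient.mk_surjective y
      have hc := dvd_lphi_neg_coeff f q d.natAbs
      rw [show (-(d.natAbs : ℤ)) = -d by omega] at hc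
      rw [← hq, psi_mk] at hy
      rw [hy, C_mul_T_apply, if_pos rfl] at hc
      obtain ⟨s', rfl⟩ : f ∣ s :=
        dvd_trans (dvd_pow_self f (by omega : d.natAbs ≠ 0)) hc
      have haf : a = f * (r * s') := by rw [← hrs]; ring
      rcases ha.isUnit_or_isUnit haf with h1 | h1
      · exact hf h1
      · exact hna (haf ▸ associated_mul_unit_left f _ h1)
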